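/- Let α, β be real with α < β < −α, let ρ(s) = (1+s)^{−(α−β)/2−1}(1−s)^{−(α+β)/2−1} for s ∈ (−1,1), for l ∈ ℕ define Ψ_l(s) = (1/ρ(s)) · (d/ds)^l [(1−s²)^l ρ(s)], for m ≤ l define Ψ_{l,m}(s) = (1−s²)^{m/2} · (d/ds)^m Ψ_l(s), and set λ_j = j(j−1−α). Then for all natural numbers m < l, the functions s ↦ Ψ_{l,m}(s)² ρ(s) and s ↦ Ψ_{l,m+1}(s)² ρ(s) are integrable on (−1,1) and ∫_{−1}^{1} Ψ_{l,m+1}(s)² ρ(s) ds = (λ_l − λ_m) · ∫_{−1}^{1} Ψ_{l,m}(s)² ρ(s) ds; that is, ‖Ψ_{l,m+1}‖ = √(λ_l − λ_m) · ‖Ψ_{l,m}‖ in the weighted L² norm. -/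

import Mathlib

open MeasureTheory

open Polynomial Filter Topology

noncomputable def jacW (α β : ℝ) (t : ℝ) : ℝ :=
  (1 + t) ^ (-(α - β) / 2 - 1) * (1 - t) ^ (-(α + β) / 2 - 1)



noncomputable def jacT (α β r : ℝ) : Polynomial ℝ :=
  C α * X + C β - C (2*r) * X

noncomputable def jacQ (α β : ℝ) (l : ℕ) : ℕ → Polynomial ℝ
  | 0 => 1
  | (k+1) => (1 - X*X) * derivative (jacQ α β l k)
      + jacT α β ((l:ℝ) - k - 1) * jacQ α β l k

def jc (α : ℝ) (l k : ℕ) : ℝ := ((k:ℝ)+1) * (2*(l:ℝ) - k - 2 - α)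

theorem jacQ_deriv (α β : ℝ) (l : ℕ) : ∀ k : ℕ,
    derivative (jacQ α β l (k+1)) = C (-(jc α l k)) * jacQ α β l k := by
  intro k
  induction k with
  | zero =>
      apply Polynomial.funext
      intro x
      show (derivative ((1 - X*X) * derivative (jacQ α β l 0)
          + jacT α β ((l:ℝ) - (0:ℕ) - 1) * jacQ α β l 0)).eval x = _
      show (derivative ((1 - X*X) * derivative (1:Polynomial ℝ)
          + jacT α β ((l:ℝ) - (0:ℕ) - 1) * (1:Polynomial ℝ))).eval x = _
      simp only [derivative_one, jacT, jc, derivative_sub, derivative_add,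
        derivative_mul, derivative_C, derivative_X, eval_add, eval_mul, eval_sub,
        eval_C, eval_X, eval_one, eval_zero, mul_zero, zero_mul, add_zero, zero_add,
        mul_one, Nat.cast_zero]
      rw [show jacQ α β l 0 = 1 from rfl]
      simp only [eval_one]
      ring
  | succ k ih =>
      have h1 : ∀ x : ℝ, (1 - x*x) * (derivative (jacQ α β l k)).eval x
          = (jacQ α β l (k+1)).eval x
            - (α*x + β - 2*((l:ℝ)-k-1)*x) * (jacQ α β l k).eval x := by
        intro x
        rw [jacQ]
        simp only [jacT, eval_add, eval_mul, eval_sub, eval_C, eval_X, eval_one]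
        ring
      apply Polynomial.funext
      intro x
      rw [show jacQ α β l (k+1+1) = (1 - X*X) * derivative (jacQ α β l (k+1))
          + jacT α β ((l:ℝ) - (k+1:ℕ) - 1) * jacQ α β l (k+1) from by rw [jacQ]]
      rw [ih]
      simp only [derivative_add, derivative_mul, derivative_sub, derivative_one,
        derivative_C, derivative_X, jacT]
      rw [ih]
      simp only [jc, jacT, eval_add, eval_mul, eval_sub, eval_C, eval_X, eval_one,
        eval_zero, eval_neg, zero_mul, mul_zero, zero_add, add_zero, mul_one, one_mul,
        Nat.cast_add, Nat.cast_one]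
      linear_combination (-(((k:ℝ))+1) * (2*(l:ℝ) - (k:ℝ) - 2 - α)) * h1 x


theorem jacW_pos (α β : ℝ) {s : ℝ} (hs : s ∈ Set.Ioo (-1:ℝ) 1) : 0 < jacW α β s := by
  have h1 : (0:ℝ) < 1 + s := by linarith [hs.1]
  have h2 : (0:ℝ) < 1 - s := by linarith [hs.2]
  exact mul_pos (Real.rpow_pos_of_pos h1 _) (Real.rpow_pos_of_pos h2 _)

theorem jac_hasDeriv (α β : ℝ) (p : Polynomial ℝ) (j : ℕ) (hj : 1 ≤ j) {s : ℝ}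
    (hs : s ∈ Set.Ioo (-1:ℝ) 1) :
    HasDerivAt (fun t => (1 - t^2)^j * jacW α β t * p.eval t)
      ((1 - s^2)^(j-1) * jacW α β s *
        (((1 - X*X) * derivative p + jacT α β ((j:ℝ)-1) * p).eval s)) s := by
  have h1 : (0:ℝ) < 1 + s := by linarith [hs.1]
  have h2 : (0:ℝ) < 1 - s := by linarith [hs.2]
  set a : ℝ := -(α - β) / 2 - 1 with ha
  set b : ℝ := -(α + β) / 2 - 1 with hb
  have hA : HasDerivAt (fun t : ℝ => (1 + t) ^ a) (1 * a * (1 + s) ^ (a - 1)) s := by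
    simpa using (HasDerivAt.const_add 1 (hasDerivAt_id s)).rpow_const (Or.inl h1.ne')
  have hB : HasDerivAt (fun t : ℝ => (1 - t) ^ b) ((-1) * b * (1 - s) ^ (b - 1)) s := by
    simpa using (HasDerivAt.const_sub 1 (hasDerivAt_id s)).rpow_const (Or.inl h2.ne')
  have hσ : HasDerivAt (fun t : ℝ => (1 - t^2)^j)
      ((j:ℝ) * (1 - s^2)^(j-1) * (-(2*s))) s := by
    have : HasDerivAt (fun t : ℝ => 1 - t^2) (-(2*s)) s := by
      simpa using (HasDerivAt.const_sub 1 (hasDerivAt_pow 2 s))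
    exact this.pow j
  have hp : HasDerivAt (fun t : ℝ => p.eval t) (p.derivative.eval s) s :=
    p.hasDerivAt s
  have hd := ((hσ.mul (hA.mul hB)).mul hp)
  have key : ((j:ℝ) * (1 - s^2)^(j-1) * (-(2*s)) * ((1+s)^a * (1-s)^b)
        + (1 - s^2)^j * (1 * a * (1+s)^(a-1) * (1-s)^b
            + (1+s)^a * ((-1) * b * (1-s)^(b-1)))) * p.eval s
      + (1 - s^2)^j * ((1+s)^a * (1-s)^b) * p.derivative.eval s
      = (1 - s^2)^(j-1) * ((1+s)^a * (1-s)^b) *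
        (((1 - X*X) * derivative p + jacT α β ((j:ℝ)-1) * p).eval s) := by
    have e1 : (1 - s^2)^j = (1 - s^2)^(j-1) * (1 - s^2) := by
      conv_lhs => rw [← Nat.sub_add_cancel hj, pow_succ]
    have e2 : (1+s) ^ (a-1) = (1+s)^a / (1+s) := Real.rpow_sub_one h1.ne' a
    have e3 : (1-s) ^ (b-1) = (1-s)^b / (1-s) := Real.rpow_sub_one h2.ne' b
    rw [e1, e2, e3]
    simp only [jacT, eval_add, eval_mul, eval_sub, eval_C, eval_X, eval_one]
    field_simp
    rw [ha, hb]
    ring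
  simp only [jacW]
  rw [← key]
  exact hd


noncomputable def jacR (α β : ℝ) (l : ℕ) : ℕ → Polynomial ℝ
  | 0 => jacQ α β l l
  | (m+1) => derivative (jacR α β l m)

def lamR (α : ℝ) (j : ℕ) : ℝ := (j:ℝ) * ((j:ℝ) - 1 - α)

theorem jacR_ode (α β : ℝ) (l : ℕ) : ∀ m : ℕ,
    (1 - X*X) * derivative (derivative (jacR α β l m))
      + jacT α β (m:ℝ) * derivative (jacR α β l m)
      + C (lamR α l - lamR α m) * jacR α β l m = 0 := by
  intro m
  induction m with
  | zero =>
      have h2 : jacQ α β l (l+1) = (1 - X*X) * derivative (jacQ α β l l)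
          + jacT α β ((l:ℝ) - l - 1) * jacQ α β l l := by rw [jacQ]
      have h3 := congrArg derivative h2
      rw [jacQ_deriv α β l l] at h3
      apply Polynomial.funext
      intro x
      have h3x := congrArg (eval x) h3
      simp only [derivative_add, derivative_mul, derivative_sub, derivative_one,
        derivative_C, derivative_X, jacT, eval_add, eval_mul, eval_sub, eval_C,
        eval_X, eval_one, eval_neg, eval_zero, jc, zero_mul, mul_zero, zero_add,
        add_zero, mul_one, one_mul, jacR, lamR, jc, Nat.cast_zero] at h3x ⊢
      linear_combination -h3x
  | succ m ih =>
      have h3 := congrArg derivative ih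
      apply Polynomial.funext
      intro x
      have h3x := congrArg (eval x) h3
      simp only [derivative_add, derivative_mul, derivative_sub, derivative_one,
        derivative_C, derivative_X, derivative_zero, jacT, eval_add, eval_mul,
        eval_sub, eval_C, eval_X, eval_one, eval_neg, eval_zero, zero_mul, mul_zero,
        zero_add, add_zero, mul_one, one_mul, jacR, lamR, Nat.cast_succ] at h3x ⊢
      push_cast
      push_cast at h3x
      linear_combination h3x


theorem jacW_contOn (α β : ℝ) : ContinuousOn (jacW α β) (Set.Ioo (-1:ℝ) 1) := by
  apply ContinuousOn.mul
  · apply ContinuousOn.rpow_const (Continuous.continuousOn (by continuity))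
    intro s hs
    left
    have : (0:ℝ) < 1 + s := by linarith [hs.1]
    exact this.ne'
  · apply ContinuousOn.rpow_const (Continuous.continuousOn (by continuity))
    intro s hs
    left
    have : (0:ℝ) < 1 - s := by linarith [hs.2]
    exact this.ne'

theorem rpow_plus_integrable {c : ℝ} (hc : -1 < c) :
    IntegrableOn (fun s : ℝ => (1 + s) ^ c) (Set.Ioc (-1:ℝ) 0) := by
  have h0 : IntervalIntegrable (fun x : ℝ => x ^ c) volume 0 1 :=
    intervalIntegral.intervalIntegrable_rpow' hc
  have h1 : IntervalIntegrable (fun x : ℝ => (x + 1) ^ c) volume (0-1) (1-1) :=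
    h0.comp_add_right 1
  have h2 : IntervalIntegrable (fun x : ℝ => (1 + x) ^ c) volume (-1) 0 := by
    simpa [add_comm, sub_self] using h1
  exact (intervalIntegrable_iff_integrableOn_Ioc_of_le (by norm_num)).mp h2

theorem rpow_minus_integrable {c : ℝ} (hc : -1 < c) :
    IntegrableOn (fun s : ℝ => (1 - s) ^ c) (Set.Ioc (0:ℝ) 1) := by
  have h0 : IntervalIntegrable (fun x : ℝ => x ^ c) volume 0 1 :=
    intervalIntegral.intervalIntegrable_rpow' hc
  have h1 : IntervalIntegrable (fun x : ℝ => (1 - x) ^ c) volume (1-1) (1-0) :=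
    (h0.comp_sub_left 1).symm
  have h2 : IntervalIntegrable (fun x : ℝ => (1 - x) ^ c) volume 0 1 := by
    simpa using h1
  exact (intervalIntegrable_iff_integrableOn_Ioc_of_le (by norm_num)).mp h2

theorem jacW_integrable (α β : ℝ) (hαβ : α < β) (hβα : β < -α) :
    IntegrableOn (jacW α β) (Set.Ioo (-1:ℝ) 1) := by
  set a : ℝ := -(α - β) / 2 - 1 with ha
  set b : ℝ := -(α + β) / 2 - 1 with hb
  have hagt : -1 < a := by rw [ha]; linarith
  have hbgt : -1 < b := by rw [hb]; linarith
  set C : ℝ := max ((2:ℝ) ^ b) 1 with hC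
  set D : ℝ := max ((2:ℝ) ^ a) 1 with hD
  have hmeas : AEStronglyMeasurable (jacW α β)
      (volume.restrict (Set.Ioo (-1:ℝ) 1)) :=
    (jacW_contOn α β).aestronglyMeasurable measurableSet_Ioo
  have hbound1 : ∀ s ∈ Set.Ioo (-1:ℝ) 0, ‖jacW α β s‖ ≤ C * (1 + s) ^ a := by
    intro s hs
    have h1 : (0:ℝ) < 1 + s := by linarith [hs.1]
    have h2 : (1:ℝ) ≤ 1 - s := by linarith [hs.2]
    have h3 : (1:ℝ) - s ≤ 2 := by linarith [hs.1]
    have hw : jacW α β s = (1+s)^a * (1-s)^b := rfl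
    rw [hw, Real.norm_eq_abs, abs_of_nonneg (by positivity)]
    rw [mul_comm C _]
    apply mul_le_mul_of_nonneg_left _ (by positivity)
    rcases le_or_gt 0 b with h | h
    · calc (1-s)^b ≤ (2:ℝ)^b := Real.rpow_le_rpow (by linarith) h3 h
        _ ≤ C := le_max_left _ _
    · calc (1-s)^b ≤ 1 := Real.rpow_le_one_of_one_le_of_nonpos h2 h.le
        _ ≤ C := le_max_right _ _
  have hbound2 : ∀ s ∈ Set.Ico (0:ℝ) 1, ‖jacW α β s‖ ≤ D * (1 - s) ^ b := by
    intro s hs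
    have h1 : (0:ℝ) < 1 - s := by linarith [hs.2]
    have h2 : (1:ℝ) ≤ 1 + s := by linarith [hs.1]
    have h3 : (1:ℝ) + s ≤ 2 := by linarith [hs.2]
    have hw : jacW α β s = (1+s)^a * (1-s)^b := rfl
    rw [hw, Real.norm_eq_abs, abs_of_nonneg (by positivity)]
    rw [mul_comm ((1+s)^a) _, mul_comm D _]
    apply mul_le_mul_of_nonneg_left _ (by positivity)
    rcases le_or_gt 0 a with h | h
    · calc (1+s)^a ≤ (2:ℝ)^a := Real.rpow_le_rpow (by linarith) h3 h
        _ ≤ D := le_max_left _ _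
    · calc (1+s)^a ≤ 1 := Real.rpow_le_one_of_one_le_of_nonpos h2 h.le
        _ ≤ D := le_max_right _ _
  have i1 : IntegrableOn (jacW α β) (Set.Ioo (-1:ℝ) 0) := by
    apply Integrable.mono' (((rpow_plus_integrable hagt).mono_set
      Set.Ioo_subset_Ioc_self).const_mul C)
    · exact hmeas.mono_set (Set.Ioo_subset_Ioo le_rfl (by norm_num))
    · rw [ae_restrict_iff' measurableSet_Ioo]
      exact Filter.Eventually.of_forall hbound1
  have i2 : IntegrableOn (jacW α β) (Set.Ioo (0:ℝ) 1) := by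
    apply Integrable.mono' (((rpow_minus_integrable hbgt).mono_set
      Set.Ioo_subset_Ioc_self).const_mul D)
    · exact hmeas.mono_set (Set.Ioo_subset_Ioo (by norm_num) le_rfl)
    · rw [ae_restrict_iff' measurableSet_Ioo]
      exact Filter.Eventually.of_forall fun s hs =>
        hbound2 s ⟨hs.1.le, hs.2⟩
  have : Set.Ioo (-1:ℝ) 1 ⊆ Set.Ioo (-1:ℝ) 0 ∪ Set.Ico (0:ℝ) 1 := by
    intro x hx
    rcases lt_or_ge x 0 with h | h
    · exact Or.inl ⟨hx.1, h⟩
    · exact Or.inr ⟨h, hx.2⟩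
  have i2' : IntegrableOn (jacW α β) (Set.Ico (0:ℝ) 1) := by
    have : Set.Ico (0:ℝ) 1 =ᵐ[volume] Set.Ioo (0:ℝ) 1 :=
      Ioo_ae_eq_Ico.symm
    exact i2.congr_set_ae this
  exact (i1.union i2').mono_set this


theorem iter_local {f g : ℝ → ℝ} {U : Set ℝ} (hU : IsOpen U)
    (h : ∀ x ∈ U, f x = g x) : ∀ n : ℕ, ∀ x ∈ U, iteratedDeriv n f x = iteratedDeriv n g x := by
  intro n
  induction n with
  | zero => simpa using h
  | succ n ih =>
      intro x hx
      rw [iteratedDeriv_succ, iteratedDeriv_succ]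
      apply Filter.EventuallyEq.deriv_eq
      filter_upwards [hU.mem_nhds hx] with y hy using ih y hy

theorem poly_iteratedDeriv (p : Polynomial ℝ) :
    ∀ m : ℕ, iteratedDeriv m (fun x => p.eval x) = fun x => (derivative^[m] p).eval x := by
  intro m
  induction m generalizing p with
  | zero => simp
  | succ m ih =>
      rw [iteratedDeriv_succ']
      rw [show deriv (fun x => p.eval x) = fun x => (derivative p).eval x from
        funext fun x => Polynomial.deriv p]
      rw [ih (derivative p), Function.iterate_succ_apply]

theorem jac_rep (α β : ℝ) (l : ℕ) : ∀ k : ℕ, k ≤ l → ∀ s ∈ Set.Ioo (-1:ℝ) 1,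
    iteratedDeriv k (fun t => (1 - t^2)^l * jacW α β t) s
      = (1 - s^2)^(l-k) * jacW α β s * (jacQ α β l k).eval s := by
  intro k
  induction k with
  | zero =>
      intro _ s _
      simp [jacQ]
  | succ k ih =>
      intro hk s hs
      have hkl : k ≤ l := (Nat.le_succ k).trans hk
      rw [iteratedDeriv_succ]
      have heq : deriv (iteratedDeriv k (fun t => (1 - t^2)^l * jacW α β t)) s
          = deriv (fun t => (1 - t^2)^(l-k) * jacW α β t * (jacQ α β l k).eval t) s := by
        apply Filter.EventuallyEq.deriv_eq
        filter_upwards [isOpen_Ioo.mem_nhds hs] with y hy using ih hkl y hy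
      rw [heq]
      have hj : 1 ≤ l - k := Nat.le_sub_of_add_le (by omega)
      have hd := (jac_hasDeriv α β (jacQ α β l k) (l-k) hj hs).deriv
      rw [hd]
      have hc : ((l - k : ℕ) : ℝ) - 1 = (l:ℝ) - k - 1 := by
        rw [Nat.cast_sub hkl]
      rw [show l - k - 1 = l - (k+1) from rfl, hc,
        show jacQ α β l (k+1) = (1 - X*X) * derivative (jacQ α β l k)
        + jacT α β ((l:ℝ) - k - 1) * jacQ α β l k from by rw [jacQ]]


theorem jac_tendsto_right (α β : ℝ) (hαβ : α < β) (hβα : β < -α)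
    (p : Polynomial ℝ) (j : ℕ) (hj : 1 ≤ j) :
    Tendsto (fun s => (1 - s^2)^j * jacW α β s * p.eval s) (𝓝[<] (1:ℝ)) (𝓝 0) := by
  set a : ℝ := -(α - β) / 2 - 1 with ha
  set b : ℝ := -(α + β) / 2 - 1 with hb
  have hja : (0:ℝ) < j + a := by
    have : (1:ℝ) ≤ j := by exact_mod_cast hj
    rw [ha]; linarith
  have hjb : (0:ℝ) < j + b := by
    have : (1:ℝ) ≤ j := by exact_mod_cast hj
    rw [hb]; linarith
  have key : Tendsto (fun s => (1+s) ^ ((j:ℝ)+a) * ((1-s) ^ ((j:ℝ)+b) * p.eval s))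
      (𝓝[<] (1:ℝ)) (𝓝 0) := by
    have T1 : Tendsto (fun s : ℝ => (1+s) ^ ((j:ℝ)+a)) (𝓝[<] (1:ℝ)) (𝓝 (2 ^ ((j:ℝ)+a))) := by
      have c1 : ContinuousAt (fun s : ℝ => (1+s) ^ ((j:ℝ)+a)) 1 := by
        apply ContinuousAt.rpow_const
        · exact (continuous_const.add continuous_id).continuousAt
        · left; norm_num
      have h2 := c1.tendsto.mono_left (nhdsWithin_le_nhds (s := Set.Iio (1:ℝ)))
      simpa [show (1:ℝ)+1=2 by norm_num] using h2
    have T2 : Tendsto (fun s : ℝ => (1-s) ^ ((j:ℝ)+b)) (𝓝[<] (1:ℝ)) (𝓝 0) := by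
      have c0 : ContinuousAt (fun x : ℝ => x ^ ((j:ℝ)+b)) 0 :=
        Real.continuousAt_rpow_const 0 _ (Or.inr hjb.le)
      have t0 : Tendsto (fun s : ℝ => 1 - s) (𝓝[<] (1:ℝ)) (𝓝 0) := by
        have h2 : Tendsto (fun s : ℝ => 1 - s) (𝓝 (1:ℝ)) (𝓝 0) := by
          have h3 := (continuous_const.sub continuous_id :
            Continuous fun s : ℝ => 1 - s).tendsto (1:ℝ)
          have h4 : Tendsto (fun s : ℝ => 1 - s) (𝓝 (1:ℝ)) (𝓝 (1 - 1)) := h3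
          simpa using h4
        exact h2.mono_left nhdsWithin_le_nhds
      have := c0.tendsto.comp t0
      simpa [Real.zero_rpow hjb.ne', Function.comp_def] using this
    have T3 : Tendsto (fun s : ℝ => p.eval s) (𝓝[<] (1:ℝ)) (𝓝 (p.eval 1)) :=
      (p.continuous_aeval.continuousAt).tendsto.mono_left nhdsWithin_le_nhds
    have := T1.mul (T2.mul T3)
    simpa using this
  apply key.congr'
  filter_upwards [Ioo_mem_nhdsLT_of_mem (Set.mem_Ioc.mpr ⟨show (-1:ℝ) < 1 by norm_num, le_refl (1:ℝ)⟩)]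
    with s hs
  have h1 : (0:ℝ) < 1 + s := by linarith [hs.1]
  have h2 : (0:ℝ) < 1 - s := by linarith [hs.2]
  have e : (1 - s^2)^j = (1+s)^(j:ℕ) * (1-s)^(j:ℕ) := by
    rw [← mul_pow]; ring
  rw [jacW, e]
  rw [← Real.rpow_natCast (1+s) j, ← Real.rpow_natCast (1-s) j,
    ← ha, ← hb]
  rw [show (1+s)^(j:ℝ) * (1-s)^(j:ℝ) * ((1+s)^a * (1-s)^b) * p.eval s
    = ((1+s)^(j:ℝ) * (1+s)^a) * (((1-s)^(j:ℝ) * (1-s)^b) * p.eval s) by ring]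
  rw [← Real.rpow_add h1, ← Real.rpow_add h2]

theorem jac_tendsto_left (α β : ℝ) (hαβ : α < β) (hβα : β < -α)
    (p : Polynomial ℝ) (j : ℕ) (hj : 1 ≤ j) :
    Tendsto (fun s => (1 - s^2)^j * jacW α β s * p.eval s) (𝓝[>] (-1:ℝ)) (𝓝 0) := by
  set a : ℝ := -(α - β) / 2 - 1 with ha
  set b : ℝ := -(α + β) / 2 - 1 with hb
  have hja : (0:ℝ) < j + a := by
    have : (1:ℝ) ≤ j := by exact_mod_cast hj
    rw [ha]; linarith
  have key : Tendsto (fun s => (1+s) ^ ((j:ℝ)+a) * ((1-s) ^ ((j:ℝ)+b) * p.eval s))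
      (𝓝[>] (-1:ℝ)) (𝓝 0) := by
    have T1 : Tendsto (fun s : ℝ => (1+s) ^ ((j:ℝ)+a)) (𝓝[>] (-1:ℝ)) (𝓝 0) := by
      have c0 : ContinuousAt (fun x : ℝ => x ^ ((j:ℝ)+a)) 0 :=
        Real.continuousAt_rpow_const 0 _ (Or.inr hja.le)
      have t0 : Tendsto (fun s : ℝ => 1 + s) (𝓝[>] (-1:ℝ)) (𝓝 0) := by
        have h2 : Tendsto (fun s : ℝ => 1 + s) (𝓝 (-1:ℝ)) (𝓝 0) := by
          have h3 := (continuous_const.add continuous_id :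
            Continuous fun s : ℝ => 1 + s).tendsto (-1:ℝ)
          have h4 : Tendsto (fun s : ℝ => 1 + s) (𝓝 (-1:ℝ)) (𝓝 (1 + -1)) := h3
          simpa using h4
        exact h2.mono_left nhdsWithin_le_nhds
      have := c0.tendsto.comp t0
      simpa [Real.zero_rpow hja.ne', Function.comp_def] using this
    have T2 : Tendsto (fun s : ℝ => (1-s) ^ ((j:ℝ)+b)) (𝓝[>] (-1:ℝ)) (𝓝 (2 ^ ((j:ℝ)+b))) := by
      have c1 : ContinuousAt (fun s : ℝ => (1-s) ^ ((j:ℝ)+b)) (-1) := by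
        apply ContinuousAt.rpow_const
        · exact (continuous_const.sub continuous_id).continuousAt
        · left; norm_num
      have h2 := c1.tendsto.mono_left (nhdsWithin_le_nhds (s := Set.Ioi (-1:ℝ)))
      simpa [show (1:ℝ)-(-1)=2 by norm_num] using h2
    have T3 : Tendsto (fun s : ℝ => p.eval s) (𝓝[>] (-1:ℝ)) (𝓝 (p.eval (-1))) :=
      (p.continuous_aeval.continuousAt).tendsto.mono_left nhdsWithin_le_nhds
    have := T1.mul (T2.mul T3)
    simpa using this
  apply key.congr'
  filter_upwards [Ioo_mem_nhdsGT_of_mem (Set.mem_Ico.mpr ⟨le_refl (-1:ℝ), show (-1:ℝ) < 1 by norm_num⟩)]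
    with s hs
  have h1 : (0:ℝ) < 1 + s := by linarith [hs.1]
  have h2 : (0:ℝ) < 1 - s := by linarith [hs.2]
  have e : (1 - s^2)^j = (1+s)^(j:ℕ) * (1-s)^(j:ℕ) := by
    rw [← mul_pow]; ring
  rw [jacW, e]
  rw [← Real.rpow_natCast (1+s) j, ← Real.rpow_natCast (1-s) j, ← ha, ← hb]
  rw [show (1+s)^(j:ℝ) * (1-s)^(j:ℝ) * ((1+s)^a * (1-s)^b) * p.eval s
    = ((1+s)^(j:ℝ) * (1+s)^a) * (((1-s)^(j:ℝ) * (1-s)^b) * p.eval s) by ring]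
  rw [← Real.rpow_add h1, ← Real.rpow_add h2]


theorem poly_mul_w_integrable (α β : ℝ) (hαβ : α < β) (hβα : β < -α) (p : Polynomial ℝ) :
    IntegrableOn (fun s => p.eval s * jacW α β s) (Set.Ioo (-1:ℝ) 1) := by
  obtain ⟨C, hC⟩ := (isCompact_Icc (a := (-1:ℝ)) (b := 1)).exists_bound_of_continuousOn
    (p.continuous_aeval.continuousOn)
  apply Integrable.bdd_mul (c := C) (jacW_integrable α β hαβ hβα)
  · exact (p.continuous_aeval.continuousOn (s := Set.Ioo (-1:ℝ) 1)).aestronglyMeasurable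
      measurableSet_Ioo
  · rw [ae_restrict_iff' measurableSet_Ioo]
    exact Filter.Eventually.of_forall fun s hs =>
      hC s ⟨hs.1.le, hs.2.le⟩


theorem jacR_iteratedDeriv (α β : ℝ) (l : ℕ) : ∀ k : ℕ,
    iteratedDeriv k (fun x => (jacQ α β l l).eval x)
      = fun x => (jacR α β l k).eval x := by
  intro k
  induction k with
  | zero => simp [jacR]
  | succ k ih =>
      rw [iteratedDeriv_succ, ih]
      funext x
      rw [show jacR α β l (k+1) = derivative (jacR α β l k) from rfl]
      exact Polynomial.deriv _

theorem jac_hpoly (α β : ℝ) (l m : ℕ) :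
    (1 - X*X) * derivative (jacR α β l m * jacR α β l (m+1))
      + jacT α β (((m+1:ℕ):ℝ)-1) * (jacR α β l m * jacR α β l (m+1))
    = (1 - X*X) * (jacR α β l (m+1))^2
      - C (lamR α l - lamR α m) * (jacR α β l m)^2 := by
  have hode := jacR_ode α β l m
  have hd1 : derivative (jacR α β l m) = jacR α β l (m+1) := rfl
  have hd2 : derivative (jacR α β l (m+1)) = jacR α β l (m+2) := rfl
  rw [hd1] at hode
  rw [hd2] at hode
  rw [show (((m+1:ℕ):ℝ)-1) = (m:ℝ) by push_cast; ring]
  rw [derivative_mul, hd1, hd2]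
  linear_combination (jacR α β l m) * hode


/-- For `α < β < -α`, the weight
`ρ(s) = (1+s)^{-(α-β)/2-1}(1-s)^{-(α+β)/2-1}` on `(-1,1)` (case
`σ(s) = 1-s²`), `Ψ_l(s) = (1/ρ(s)) (d/ds)^l [(1-s²)^l ρ(s)]`,
`Ψ_{l,m}(s) = (1-s²)^{m/2} (d/ds)^m Ψ_l(s)` and `λ_j = j(j-1-α)`,
for all `m < l` the functions `s ↦ Ψ_{l,m}(s)² ρ(s)` and
`s ↦ Ψ_{l,m+1}(s)² ρ(s)` are integrable on `(-1,1)` and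
`∫ Ψ_{l,m+1}² ρ = (λ_l - λ_m) ∫ Ψ_{l,m}² ρ`, i.e.
`‖Ψ_{l,m+1}‖ = √(λ_l - λ_m) ‖Ψ_{l,m}‖` in the weighted L² norm. -/
theorem norm_relation_associated_functions_jacobi
    (α β : ℝ) (hαβ : α < β) (hβα : β < -α)
    (ρ : ℝ → ℝ)
    (hρ : ∀ s : ℝ, s ∈ Set.Ioo (-1 : ℝ) 1 →
      ρ s = (1 + s) ^ (-(α - β) / 2 - 1) * (1 - s) ^ (-(α + β) / 2 - 1))
    (Ψ : ℕ → ℝ → ℝ)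
    (hΨ : ∀ (l : ℕ) (s : ℝ), s ∈ Set.Ioo (-1 : ℝ) 1 →
      Ψ l s = (1 / ρ s) * iteratedDeriv l (fun t => (1 - t ^ 2) ^ l * ρ t) s)
    (Ψa : ℕ → ℕ → ℝ → ℝ)
    (hΨa : ∀ (l m : ℕ) (s : ℝ), s ∈ Set.Ioo (-1 : ℝ) 1 →
      Ψa l m s = (1 - s ^ 2) ^ ((m : ℝ) / 2) * iteratedDeriv m (Ψ l) s)
    (lam : ℕ → ℝ) (hlam : ∀ j : ℕ, lam j = (j : ℝ) * ((j : ℝ) - 1 - α))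
    (m l : ℕ) (hml : m < l) :
    IntegrableOn (fun s => Ψa l m s ^ 2 * ρ s) (Set.Ioo (-1 : ℝ) 1) ∧
    IntegrableOn (fun s => Ψa l (m + 1) s ^ 2 * ρ s) (Set.Ioo (-1 : ℝ) 1) ∧
      ∫ s in Set.Ioo (-1 : ℝ) 1, Ψa l (m + 1) s ^ 2 * ρ s
        = (lam l - lam m) * ∫ s in Set.Ioo (-1 : ℝ) 1, Ψa l m s ^ 2 * ρ s := by
  have hIoo : MeasurableSet (Set.Ioo (-1:ℝ) 1) := measurableSet_Ioo
  -- ρ = jacW on Ioo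
  have hρw : ∀ s ∈ Set.Ioo (-1:ℝ) 1, ρ s = jacW α β s := fun s hs => hρ s hs
  -- Ψ l is the polynomial jacQ l l on Ioo
  have hΨeq : ∀ s ∈ Set.Ioo (-1:ℝ) 1, Ψ l s = (jacQ α β l l).eval s := by
    intro s hs
    rw [hΨ l s hs]
    have h1 : iteratedDeriv l (fun t => (1 - t^2)^l * ρ t) s
        = iteratedDeriv l (fun t => (1 - t^2)^l * jacW α β t) s :=
      iter_local isOpen_Ioo (fun x hx => by rw [hρw x hx]) l s hs
    rw [h1, jac_rep α β l l le_rfl s hs, Nat.sub_self, pow_zero, one_mul, hρw s hs]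
    field_simp [(jacW_pos α β hs).ne']
  have hIter : ∀ k : ℕ, ∀ s ∈ Set.Ioo (-1:ℝ) 1,
      iteratedDeriv k (Ψ l) s = (jacR α β l k).eval s := by
    intro k s hs
    rw [iter_local isOpen_Ioo hΨeq k s hs, jacR_iteratedDeriv α β l k]
  -- squared associated functions
  have hsq : ∀ k : ℕ, ∀ s ∈ Set.Ioo (-1:ℝ) 1, Ψa l k s ^ 2 * ρ s
      = (1 - s^2)^k * jacW α β s * ((jacR α β l k).eval s)^2 := by
    intro k s hs
    have h0 : (0:ℝ) < 1 - s^2 := by nlinarith [hs.1, hs.2]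
    rw [hΨa l k s hs, hIter k s hs, hρw s hs, mul_pow]
    have key : ((1 - s^2) ^ ((k:ℝ)/2))^2 = (1 - s^2)^k := by
      rw [← Real.rpow_natCast ((1 - s^2) ^ ((k:ℝ)/2)) 2, ← Real.rpow_mul h0.le]
      rw [show ((k:ℝ)/2) * ((2:ℕ):ℝ) = (k:ℝ) by push_cast; ring]
      rw [Real.rpow_natCast]
    rw [key]; ring
  -- integrability of the polynomial forms
  have hFint : ∀ k : ℕ, IntegrableOn
      (fun s => (1 - s^2)^k * jacW α β s * ((jacR α β l k).eval s)^2)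
      (Set.Ioo (-1:ℝ) 1) := by
    intro k
    have he : (fun s : ℝ => (1 - s^2)^k * jacW α β s * ((jacR α β l k).eval s)^2)
        = fun s => (((1 - X*X)^k * (jacR α β l k)^2).eval s) * jacW α β s := by
      funext s
      simp only [eval_mul, eval_pow, eval_sub, eval_one, eval_X]
      ring
    rw [he]
    exact poly_mul_w_integrable α β hαβ hβα _
  have hInt : ∀ k : ℕ, IntegrableOn (fun s => Ψa l k s ^ 2 * ρ s)
      (Set.Ioo (-1:ℝ) 1) :=
    fun k => (hFint k).congr_fun (fun s hs => (hsq k s hs).symm) hIoo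
  refine ⟨hInt m, hInt (m+1), ?_⟩
  -- the derivative function for FTC
  set lv : ℝ := lamR α l - lamR α m with hlv
  set g' : ℝ → ℝ := fun s =>
    (1 - s^2)^(m+1) * jacW α β s * ((jacR α β l (m+1)).eval s)^2
      - lv * ((1 - s^2)^m * jacW α β s * ((jacR α β l m).eval s)^2) with hg'
  have hG : ∀ s ∈ Set.Ioo (-1:ℝ) 1, HasDerivAt
      (fun t => (1 - t^2)^(m+1) * jacW α β t
        * ((jacR α β l m * jacR α β l (m+1)).eval t)) (g' s) s := by
    intro s hs
    have h := jac_hasDeriv α β (jacR α β l m * jacR α β l (m+1)) (m+1)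
      (Nat.le_add_left 1 m) hs
    have hval : (1 - s^2)^(m+1-1) * jacW α β s *
        (((1 - X*X) * derivative (jacR α β l m * jacR α β l (m+1))
          + jacT α β (((m+1:ℕ):ℝ)-1) * (jacR α β l m * jacR α β l (m+1))).eval s)
        = g' s := by
      rw [jac_hpoly α β l m, hg']
      simp only [Nat.add_sub_cancel, eval_sub, eval_mul, eval_pow, eval_one,
        eval_X, eval_C]
      rw [hlv]
      ring
    rw [← hval]
    exact h
  have hg'int : IntegrableOn g' (Set.Ioo (-1:ℝ) 1) := by
    have he : g' = fun s => (((1 - X*X)^(m+1) * (jacR α β l (m+1))^2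
        - C lv * ((1 - X*X)^m * (jacR α β l m)^2)).eval s) * jacW α β s := by
      funext s
      simp only [hg', eval_sub, eval_mul, eval_pow, eval_one, eval_X, eval_C]
      ring
    rw [he]
    exact poly_mul_w_integrable α β hαβ hβα _
  have hivi : IntervalIntegrable g' volume (-1) 1 := by
    rw [intervalIntegrable_iff_integrableOn_Ioc_of_le (by norm_num)]
    exact hg'int.congr_set_ae Ioo_ae_eq_Ioc.symm
  have hFTC := intervalIntegral.integral_eq_sub_of_hasDerivAt_of_tendsto
    (show (-1:ℝ) < 1 by norm_num) hG hivi
    (jac_tendsto_left α β hαβ hβα (jacR α β l m * jacR α β l (m+1)) (m+1)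
      (Nat.le_add_left 1 m))
    (jac_tendsto_right α β hαβ hβα (jacR α β l m * jacR α β l (m+1)) (m+1)
      (Nat.le_add_left 1 m))
  have h0 : ∫ s in Set.Ioo (-1:ℝ) 1, g' s = 0 := by
    rw [← MeasureTheory.integral_Ioc_eq_integral_Ioo,
      ← intervalIntegral.integral_of_le (show (-1:ℝ) ≤ 1 by norm_num)]
    rw [hFTC]; ring
  have hsplit : ∫ s in Set.Ioo (-1:ℝ) 1, g' s
      = (∫ s in Set.Ioo (-1:ℝ) 1,
          (1 - s^2)^(m+1) * jacW α β s * ((jacR α β l (m+1)).eval s)^2)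
        - lv * ∫ s in Set.Ioo (-1:ℝ) 1,
            (1 - s^2)^m * jacW α β s * ((jacR α β l m).eval s)^2 := by
    rw [hg']
    rw [integral_sub (hFint (m+1)) ((hFint m).const_mul lv)]
    rw [MeasureTheory.integral_const_mul]
  have e1 : ∫ s in Set.Ioo (-1:ℝ) 1, Ψa l (m+1) s ^ 2 * ρ s
      = ∫ s in Set.Ioo (-1:ℝ) 1,
          (1 - s^2)^(m+1) * jacW α β s * ((jacR α β l (m+1)).eval s)^2 :=
    setIntegral_congr_fun hIoo (fun s hs => hsq (m+1) s hs)
  have e0 : ∫ s in Set.Ioo (-1:ℝ) 1, Ψa l m s ^ 2 * ρ s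
      = ∫ s in Set.Ioo (-1:ℝ) 1,
          (1 - s^2)^m * jacW α β s * ((jacR α β l m).eval s)^2 :=
    setIntegral_congr_fun hIoo (fun s hs => hsq m s hs)
  rw [e1, e0]
  have hlamv : lam l - lam m = lv := by
    rw [hlv, hlam, hlam, lamR, lamR]
  rw [hlamv]
  rw [hsplit] at h0
  linarith [h0]
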